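/- arXiv:2401.13808 — 2 statements merged into one kernel-verified Lean document; each statement's English description precedes it below -/
import Mathlib

section
/- With α(x) = Arg T(x + i√(1-x²)), T(z) = (z+1/3)/(1+z/3): for small s > 0, if x₁, x₂ ∈ [-1,1] and |x₁ - x₂| ≤ s, then |α(x₁) - α(x₂)| ≤ α(-1) - α(-1+s) < 4√s. -/
noncomputable def alphaFn (x : ℝ) : ℝ :=
  Complex.arg
    ((((x : ℂ) + Real.sqrt (1 - x ^ 2) * Complex.I) + 1 / 3) /
      (1 + ((x : ℂ) + Real.sqrt (1 - x ^ 2) * Complex.I) / 3))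

lemma sqrt_helper {x : ℝ} (h1 : -1 ≤ x) (h2 : x ≤ 1) :
    Real.sqrt (1 - ((5*x+3)/(3*x+5))^2) = 4*Real.sqrt (1-x^2)/(3*x+5) := by
  have hd : (0:ℝ) < 3*x+5 := by linarith
  have hr : Real.sqrt (1-x^2) ^ 2 = 1 - x^2 := Real.sq_sqrt (by nlinarith)
  have : 1 - ((5*x+3)/(3*x+5))^2 = (4*Real.sqrt (1-x^2)/(3*x+5))^2 := by
    rw [div_pow, div_pow, mul_pow, hr, eq_div_iff (pow_pos hd 2).ne', sub_mul, div_mul_cancel₀ _ (pow_pos hd 2).ne']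
    ring
  rw [this, Real.sqrt_sq (by positivity)]

lemma gmem {x : ℝ} (h1 : -1 ≤ x) (h2 : x ≤ 1) :
    -1 ≤ (5*x+3)/(3*x+5) ∧ (5*x+3)/(3*x+5) ≤ 1 := by
  have hd : (0:ℝ) < 3*x+5 := by linarith
  constructor
  · rw [le_div_iff₀ hd]; linarith
  · rw [div_le_one hd]; linarith

lemma alphaFn_eq {x : ℝ} (h1 : -1 ≤ x) (h2 : x ≤ 1) :
    alphaFn x = Real.arccos ((5*x+3)/(3*x+5)) := by
  have hd : (0:ℝ) < 3*x+5 := by linarith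
  set θ := Real.arccos ((5*x+3)/(3*x+5)) with hθ
  have hg := gmem h1 h2
  have hcos : Real.cos θ = (5*x+3)/(3*x+5) := Real.cos_arccos hg.1 hg.2
  have hsin : Real.sin θ = 4*Real.sqrt (1-x^2)/(3*x+5) := by
    rw [hθ, Real.sin_arccos, sqrt_helper h1 h2]
  have hr : (Real.sqrt (1-x^2) : ℂ) ^ 2 = 1 - (x:ℂ)^2 := by
    rw [← Complex.ofReal_pow, Real.sq_sqrt (by nlinarith : (0:ℝ) ≤ 1 - x^2)]
    push_cast; ring
  have hDne : (1 : ℂ) + ((x : ℂ) + Real.sqrt (1 - x ^ 2) * Complex.I) / 3 ≠ 0 := by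
    intro h
    have h3 : ((x : ℂ) + Real.sqrt (1 - x ^ 2) * Complex.I) = -3 := by
      linear_combination 3*h
    have hre := congrArg Complex.re h3
    simp only [Complex.add_re, Complex.ofReal_re, Complex.mul_re, Complex.I_re,
      Complex.I_im, Complex.ofReal_im, mul_zero, mul_one, zero_sub, neg_zero] at hre
    norm_num at hre
    linarith
  have key : (((x : ℂ) + Real.sqrt (1 - x ^ 2) * Complex.I) + 1 / 3) /
      (1 + ((x : ℂ) + Real.sqrt (1 - x ^ 2) * Complex.I) / 3)
      = (Real.cos θ : ℂ) + (Real.sin θ : ℂ) * Complex.I := by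
    rw [div_eq_iff hDne, hcos, hsin]
    push_cast
    have hdc' : (3*(x:ℂ)+5) ≠ 0 := by
      intro h
      have := congrArg Complex.re h
      simp only [Complex.add_re, Complex.mul_re, Complex.ofReal_re, Complex.ofReal_im] at this
      norm_num at this
      linarith
    have hdc'' : (x:ℂ)*3+5 ≠ 0 := by rw [add_comm, mul_comm] at hdc'; rw [add_comm]; exact hdc'
    field_simp
    linear_combination 4*hr - 4*((Real.sqrt (1-x^2):ℂ))^2*Complex.I_sq
  rw [alphaFn, key, Complex.ofReal_cos, Complex.ofReal_sin]
  exact Complex.arg_cos_add_sin_mul_I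
    ⟨by linarith [Real.pi_pos, Real.arccos_nonneg ((5*x+3)/(3*x+5))], Real.arccos_le_pi _⟩

lemma arccos_anti {a b : ℝ} (h : a ≤ b) : Real.arccos b ≤ Real.arccos a := by
  rw [Real.arccos_eq_pi_div_two_sub_arcsin, Real.arccos_eq_pi_div_two_sub_arcsin]
  linarith [Real.monotone_arcsin h]

lemma sqrt_s_helper {s : ℝ} (hs0 : 0 < s) (hs1 : s ≤ 1) :
    Real.sqrt (1 - ((2-5*s)/(2+3*s))^2) = 4*Real.sqrt (s*(2-s))/(2+3*s) := by
  have hd : (0:ℝ) < 2+3*s := by linarith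
  have hq : Real.sqrt (s*(2-s)) ^ 2 = s*(2-s) := Real.sq_sqrt (by nlinarith)
  have : 1 - ((2-5*s)/(2+3*s))^2 = (4*Real.sqrt (s*(2-s))/(2+3*s))^2 := by
    have e1 : Real.sqrt s ^2 = s := Real.sq_sqrt hs0.le
    have e2 : Real.sqrt (2-s) ^2 = 2-s := Real.sq_sqrt (by linarith)
    have e3 : (Real.sqrt s * Real.sqrt (2-s))^2 = s*(2-s) := by
      rw [mul_pow, e1, e2]
    field_simp
    nlinarith [e3, hq]
  rw [this, Real.sqrt_sq (by positivity)]

lemma Fpoly {s x : ℝ} (hs0 : 0 < s) (hs1 : s ≤ 1/100) (hx1 : -1 ≤ x)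
    (hlt : x*(4+30*s) ≤ 4 - 34*s) :
    0 ≤ 4*(1-x)*(2-s)*(3*x+3*s+5)^2 - s*(x+1)*(15*x+19+15*s)^2 := by
  nlinarith [sq_nonneg (x+1), sq_nonneg (1-x), mul_nonneg (sub_nonneg.2 hs1) (sq_nonneg (x+1)),
    mul_nonneg hs0.le (sq_nonneg (x-1)), mul_nonneg hs0.le (sq_nonneg (x+1)), sq_nonneg (x*s),
    mul_nonneg (mul_nonneg hs0.le hs0.le) (sq_nonneg x)]

set_option maxHeartbeats 1000000 in
lemma keyIneq {s x y : ℝ} (hs0 : 0 < s) (hs1 : s ≤ 1/100) (hx1 : -1 ≤ x) (hx2 : x ≤ 1)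
    (hy1 : -1 ≤ y) (hxy : y ≤ x + s)
    (hlt : x*(4+30*s) ≤ 4 - 34*s) :
    (5*y+3)/(3*y+5) ≤ (5*x+3)/(3*x+5) * ((2-5*s)/(2+3*s))
      + (4*Real.sqrt (1-x^2)/(3*x+5)) * (4*Real.sqrt (s*(2-s))/(2+3*s)) := by
  set r := Real.sqrt (1-x^2) with hrdef
  set q := Real.sqrt (s*(2-s)) with hqdef
  have hr0 : 0 ≤ r := Real.sqrt_nonneg _
  have hq0 : 0 ≤ q := Real.sqrt_nonneg _
  have hr2 : r^2 = 1-x^2 := Real.sq_sqrt (by nlinarith)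
  have hq2 : q^2 = s*(2-s) := Real.sq_sqrt (by nlinarith)
  have hdx : (0:ℝ) < 3*x+5 := by linarith
  have hdy : (0:ℝ) < 3*y+5 := by linarith
  have hds : (0:ℝ) < 2+3*s := by linarith
  have hM : (0:ℝ) < 3*x+3*s+5 := by linarith
  have hF : 0 ≤ 4*(1-x)*(2-s)*(3*x+3*s+5)^2 - s*(x+1)*(15*x+19+15*s)^2 :=
    Fpoly hs0 hs1 hx1 hlt
  have hL0 : 0 ≤ 8*s*(x+1)*(15*x+19+15*s) := by
    have h1 : (0:ℝ) ≤ x+1 := by linarith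
    have h2 : (0:ℝ) ≤ 15*x+19+15*s := by linarith
    positivity
  have hB0 : 0 ≤ 16*r*q*(3*x+3*s+5) := by positivity
  have hBsq : (16*r*q*(3*x+3*s+5))^2 = 256*(1-x^2)*(s*(2-s))*(3*x+3*s+5)^2 := by
    have h : (16*r*q*(3*x+3*s+5))^2 = 256*r^2*q^2*(3*x+3*s+5)^2 := by ring
    rw [h, hr2, hq2]
  have hL2 : (8*s*(x+1)*(15*x+19+15*s))^2 ≤ (16*r*q*(3*x+3*s+5))^2 := by
    rw [hBsq]
    nlinarith [mul_nonneg (mul_nonneg hs0.le (show (0:ℝ) ≤ x+1 by linarith)) hF]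
  have hLB : 8*s*(x+1)*(15*x+19+15*s) ≤ 16*r*q*(3*x+3*s+5) := by
    have h := Real.sqrt_le_sqrt hL2
    rwa [Real.sqrt_sq hL0, Real.sqrt_sq hB0] at h
  rw [div_mul_div_comm, div_mul_div_comm, ← add_div,
    div_le_div_iff₀ hdy (by positivity)]
  have h5 : 0 ≤ 5*((3*x+5)*(2+3*s)) - 3*((5*x+3)*(2-5*s)+16*r*q) := by
    nlinarith [sq_nonneg (r-q), hr2, hq2]
  nlinarith [hLB, mul_nonneg (sub_nonneg.2 hxy) h5]

lemma cos_bound {s : ℝ} (hs0 : 0 < s) (hs1 : s ≤ 1/100) :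
    Real.cos (4*Real.sqrt s) < (2-5*s)/(2+3*s) := by
  have hq : Real.sqrt s ^2 = s := Real.sq_sqrt hs0.le
  have hq0 : 0 < Real.sqrt s := Real.sqrt_pos.2 hs0
  have hq1 : Real.sqrt s ≤ 1/10 := by nlinarith
  have h2 : 2*Real.sqrt s - (2*Real.sqrt s)^3/4 < Real.sin (2*Real.sqrt s) :=
    by have := Real.sin_gt_sub_cube (x := 2*Real.sqrt s) (by linarith); nlinarith [pow_pos (by linarith : (0:ℝ) < 2*Real.sqrt s) 3]
  have hcube : 2*Real.sqrt s - (2*Real.sqrt s)^3/4 = 2*Real.sqrt s*(1-s) := by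
    have : (Real.sqrt s)^3 = s * Real.sqrt s := by
      rw [pow_succ, hq]
    rw [show (2*Real.sqrt s)^3 = 8*(Real.sqrt s)^3 by ring, this]; ring
  rw [hcube] at h2
  have h0 : 0 < 2*Real.sqrt s*(1-s) := by
    nlinarith [mul_pos hq0 (show (0:ℝ) < 1-s by linarith)]
  have hsin_pos : 0 < Real.sin (2*Real.sqrt s) := lt_trans h0 h2
  have hsq : (2*Real.sqrt s*(1-s))^2 = 4*s*(1-s)^2 := by
    have h' : (2*Real.sqrt s*(1-s))^2 = 4*(Real.sqrt s)^2*(1-s)^2 := by ring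
    rw [h', hq]
  have hsin2 : 4*s*(1-s)^2 ≤ Real.sin (2*Real.sqrt s)^2 := by
    rw [← hsq]
    exact pow_le_pow_left₀ h0.le h2.le 2
  have hpy := Real.sin_sq_add_cos_sq (2*Real.sqrt s)
  have hc : Real.cos (4*Real.sqrt s) = 1 - 2*Real.sin (2*Real.sqrt s)^2 := by
    rw [show (4:ℝ)*Real.sqrt s = 2*(2*Real.sqrt s) by ring, Real.cos_two_mul]
    nlinarith [hpy]
  rw [hc, lt_div_iff₀ (by linarith : (0:ℝ) < 2+3*s)]
  have key2 : 4*s*(1-s)^2*(2+3*s) ≤ Real.sin (2*Real.sqrt s)^2*(2+3*s) :=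
    mul_le_mul_of_nonneg_right hsin2 (by linarith)
  nlinarith [key2, hs0, hs1, mul_pos hs0 hs0, mul_pos (mul_pos hs0 hs0) hs0]

lemma delta_lt {s : ℝ} (hs0 : 0 < s) (hs1 : s ≤ 1/100) :
    Real.arccos ((2-5*s)/(2+3*s)) < 4*Real.sqrt s := by
  by_contra h
  push_neg at h
  have hu1 : (2-5*s)/(2+3*s) ≤ 1 := by
    rw [div_le_one (by linarith)]; linarith
  have hu0 : -1 ≤ (2-5*s)/(2+3*s) := by
    rw [le_div_iff₀ (by linarith : (0:ℝ) < 2+3*s)]; linarith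
  have h1 : Real.cos (Real.arccos ((2-5*s)/(2+3*s))) ≤ Real.cos (4*Real.sqrt s) :=
    Real.cos_le_cos_of_nonneg_of_le_pi (by positivity) (Real.arccos_le_pi _) h
  rw [Real.cos_arccos hu0 hu1] at h1
  linarith [cos_bound hs0 hs1]

/-- one-sided increment bound -/
lemma step_bound {s x y : ℝ} (hs0 : 0 < s) (hs1 : s ≤ 1/100)
    (hx1 : -1 ≤ x) (hx2 : x ≤ 1) (hy1 : -1 ≤ y) (hy2 : y ≤ 1)
    (hxy : x ≤ y) (hd : y - x ≤ s) :
    Real.arccos ((5*x+3)/(3*x+5)) - Real.arccos ((5*y+3)/(3*y+5))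
      ≤ Real.arccos ((2-5*s)/(2+3*s)) := by
  set Δ := Real.arccos ((2-5*s)/(2+3*s)) with hΔdef
  have hds : (0:ℝ) < 2+3*s := by linarith
  have hu1 : (2-5*s)/(2+3*s) ≤ 1 := by
    rw [div_le_one hds]; linarith
  have hu0 : -1 ≤ (2-5*s)/(2+3*s) := by
    rw [le_div_iff₀ hds]; linarith
  have hAy0 : 0 ≤ Real.arccos ((5*y+3)/(3*y+5)) := Real.arccos_nonneg _
  rcases le_or_gt (Real.arccos ((5*x+3)/(3*x+5))) Δ with hcase | hcase
  · linarith
  · -- hard case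
    have hdx : (0:ℝ) < 3*x+5 := by linarith
    have hgx := gmem hx1 hx2
    have hgy := gmem hy1 hy2
    -- from hcase : Δ < arccos (g x), deduce g x < u
    have hgu : (5*x+3)/(3*x+5) < (2-5*s)/(2+3*s) := by
      by_contra hcon
      push_neg at hcon
      exact absurd (arccos_anti hcon) (not_le.2 hcase)
    have hlt : x*(4+30*s) ≤ 4 - 34*s := by
      rw [div_lt_div_iff₀ hdx hds] at hgu
      nlinarith
    have hkey := keyIneq hs0 hs1 hx1 hx2 hy1 (by linarith) hlt
    -- cos (A x - Δ) computation
    have hcosΔ : Real.cos Δ = (2-5*s)/(2+3*s) := Real.cos_arccos hu0 hu1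
    have hsinΔ : Real.sin Δ = 4*Real.sqrt (s*(2-s))/(2+3*s) := by
      rw [hΔdef, Real.sin_arccos, sqrt_s_helper hs0 (by linarith)]
    have hcosA : Real.cos (Real.arccos ((5*x+3)/(3*x+5))) = (5*x+3)/(3*x+5) :=
      Real.cos_arccos hgx.1 hgx.2
    have hsinA : Real.sin (Real.arccos ((5*x+3)/(3*x+5))) = 4*Real.sqrt (1-x^2)/(3*x+5) := by
      rw [Real.sin_arccos, sqrt_helper hx1 hx2]
    have hcs : Real.cos (Real.arccos ((5*x+3)/(3*x+5)) - Δ)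
        = (5*x+3)/(3*x+5) * ((2-5*s)/(2+3*s))
          + (4*Real.sqrt (1-x^2)/(3*x+5)) * (4*Real.sqrt (s*(2-s))/(2+3*s)) := by
      rw [Real.cos_sub, hcosΔ, hsinΔ, hcosA, hsinA]
    have hcomp : Real.cos (Real.arccos ((5*y+3)/(3*y+5)))
        ≤ Real.cos (Real.arccos ((5*x+3)/(3*x+5)) - Δ) := by
      rw [hcs, Real.cos_arccos hgy.1 hgy.2]
      exact hkey
    -- conclude
    by_contra hcon
    push_neg at hcon
    have hmem1 : Real.arccos ((5*y+3)/(3*y+5)) ∈ Set.Icc 0 Real.pi :=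
      ⟨hAy0, Real.arccos_le_pi _⟩
    have hmem2 : Real.arccos ((5*x+3)/(3*x+5)) - Δ ∈ Set.Icc 0 Real.pi :=
      ⟨by linarith, by linarith [Real.arccos_le_pi ((5*x+3)/(3*x+5)), Real.arccos_nonneg ((2-5*s)/(2+3*s))]⟩
    have := Real.strictAntiOn_cos hmem1 hmem2 (by linarith)
    linarith
  
theorem stmt_12 :
    ∃ s₀ > (0 : ℝ), ∀ s : ℝ, 0 < s → s < s₀ →
      ∀ x₁ ∈ Set.Icc (-1 : ℝ) 1, ∀ x₂ ∈ Set.Icc (-1 : ℝ) 1, |x₁ - x₂| ≤ s →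
        |alphaFn x₁ - alphaFn x₂| ≤ alphaFn (-1) - alphaFn (-1 + s) ∧
        alphaFn (-1) - alphaFn (-1 + s) < 4 * Real.sqrt s := by
  refine ⟨1/100, by norm_num, fun s hs0 hs1 x₁ hx₁ x₂ hx₂ hdist => ?_⟩
  have hs1' : s ≤ 1/100 := hs1.le
  -- rewrite alphaFn values
  have hA1 : alphaFn (-1) = Real.pi := by
    rw [alphaFn_eq (le_refl _) (by norm_num)]
    norm_num
  have hAs : alphaFn (-1+s) = Real.arccos ((5*(-1+s)+3)/(3*(-1+s)+5)) :=
    alphaFn_eq (by linarith) (by linarith)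
  have hgs : (5*(-1+s)+3)/(3*(-1+s)+5) = -((2-5*s)/(2+3*s)) := by
    rw [show (3*(-1+s)+5 : ℝ) = 2+3*s by ring, ← neg_div]
    congr 1
    ring
  have hΔ : alphaFn (-1) - alphaFn (-1+s) = Real.arccos ((2-5*s)/(2+3*s)) := by
    rw [hA1, hAs, hgs, Real.arccos_neg]
    ring
  rw [hΔ]
  constructor
  · -- increment bound
    rw [alphaFn_eq hx₁.1 hx₁.2, alphaFn_eq hx₂.1 hx₂.2, abs_sub_le_iff]
    have hΔ0 : 0 ≤ Real.arccos ((2-5*s)/(2+3*s)) := Real.arccos_nonneg _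
    rcases le_total x₁ x₂ with hle | hle
    · have hmono : Real.arccos ((5*x₂+3)/(3*x₂+5)) ≤ Real.arccos ((5*x₁+3)/(3*x₁+5)) := by
        apply arccos_anti
        rw [div_le_div_iff₀ (by linarith [hx₁.1] : (0:ℝ) < 3*x₁+5) (by linarith [hx₂.1] : (0:ℝ) < 3*x₂+5)]
        nlinarith
      have hd : x₂ - x₁ ≤ s := by
        rw [abs_sub_le_iff] at hdist; linarith [hdist.1, hdist.2]
      exact ⟨(step_bound hs0 hs1' hx₁.1 hx₁.2 hx₂.1 hx₂.2 hle hd), by linarith⟩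
    · have hmono : Real.arccos ((5*x₁+3)/(3*x₁+5)) ≤ Real.arccos ((5*x₂+3)/(3*x₂+5)) := by
        apply arccos_anti
        rw [div_le_div_iff₀ (by linarith [hx₂.1] : (0:ℝ) < 3*x₂+5) (by linarith [hx₁.1] : (0:ℝ) < 3*x₁+5)]
        nlinarith
      have hd : x₁ - x₂ ≤ s := by
        rw [abs_sub_le_iff] at hdist; linarith [hdist.1, hdist.2]
      exact ⟨by linarith, step_bound hs0 hs1' hx₂.1 hx₂.2 hx₁.1 hx₁.2 hle hd⟩
  · exact delta_lt hs0 hs1'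
end

section
/- Let δ > 0, N a positive integer, and suppose complex numbers w_j = r_j e^{iφ_j} (j = 1,2) lie on a circle of center c ∈ ℝ and radius ρ with 1 < c < 2 and 1 < ρ < 2, with |r_j - 1| ≤ δ and 0 < φ_j < π. Then |sin((φ₁+φ₂)/2)·sin((φ₁-φ₂)/2)| < 3δ, and consequently |φ₁ - φ₂| < 4π√δ. -/
set_option maxHeartbeats 1000000

open Real in
private lemma sin_aux_17 (x y : ℝ) (hx : 0 ≤ x) (hxy : x ≤ y) (hy : y ≤ π - x) :
    Real.sin x ≤ Real.sin y := by
  have hπ := Real.pi_pos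
  rcases le_or_gt y (π/2) with h | h
  · exact Real.strictMonoOn_sin.monotoneOn ⟨by linarith, by linarith⟩
      ⟨by linarith, h⟩ hxy
  · rw [← Real.sin_pi_sub y]
    exact Real.strictMonoOn_sin.monotoneOn ⟨by linarith, by linarith⟩
      ⟨by linarith, by linarith⟩ (by linarith)

private lemma locos_17 (c ρ r φ : ℝ)
    (hw : ‖(r : ℂ) * Complex.exp (φ * Complex.I) - c‖ = ρ) :
    r^2 - 2*c*r*Real.cos φ + c^2 = ρ^2 := by
  have h : Complex.normSq ((r : ℂ) * Complex.exp (φ * Complex.I) - c) = ρ^2 := by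
    rw [← Complex.sq_norm, hw]
  simp [Complex.normSq_apply, Complex.exp_mul_I, Complex.mul_re, Complex.mul_im,
    Complex.cos_ofReal_re, Complex.sin_ofReal_re] at h
  nlinarith [Real.sin_sq_add_cos_sq φ, h]

theorem stmt_17 (δ : ℝ) (hδ : 0 < δ) (N : ℕ) (hN : 0 < N)
    (c ρ r₁ r₂ φ₁ φ₂ : ℝ) (hc1 : 1 < c) (hc2 : c < 2) (hρ1 : 1 < ρ) (hρ2 : ρ < 2)
    (hr₁ : |r₁ - 1| ≤ δ) (hr₂ : |r₂ - 1| ≤ δ)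
    (hφ₁ : 0 < φ₁) (hφ₁' : φ₁ < Real.pi) (hφ₂ : 0 < φ₂) (hφ₂' : φ₂ < Real.pi)
    (hw₁ : ‖(r₁ : ℂ) * Complex.exp (φ₁ * Complex.I) - c‖ = ρ)
    (hw₂ : ‖(r₂ : ℂ) * Complex.exp (φ₂ * Complex.I) - c‖ = ρ) :
    |Real.sin ((φ₁ + φ₂) / 2) * Real.sin ((φ₁ - φ₂) / 2)| < 3 * δ ∧
    |φ₁ - φ₂| < 4 * Real.pi * Real.sqrt δ := by
  have hπ := Real.pi_pos
  have E₁ := locos_17 c ρ r₁ φ₁ hw₁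
  have E₂ := locos_17 c ρ r₂ φ₂ hw₂
  have hx₁u : Real.cos φ₁ < 1 := by
    have := Real.cos_lt_cos_of_nonneg_of_le_pi le_rfl hφ₁'.le hφ₁
    simpa using this
  have hx₂u : Real.cos φ₂ < 1 := by
    have := Real.cos_lt_cos_of_nonneg_of_le_pi le_rfl hφ₂'.le hφ₂
    simpa using this
  have hx₁l : -1 < Real.cos φ₁ := by
    have := Real.cos_lt_cos_of_nonneg_of_le_pi hφ₁.le le_rfl hφ₁'
    simpa using this
  have hx₂l : -1 < Real.cos φ₂ := by
    have := Real.cos_lt_cos_of_nonneg_of_le_pi hφ₂.le le_rfl hφ₂'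
    simpa using this
  have hprod : Real.sin ((φ₁ + φ₂) / 2) * Real.sin ((φ₁ - φ₂) / 2)
      = (Real.cos φ₂ - Real.cos φ₁) / 2 := by
    have := Real.cos_sub_cos φ₁ φ₂
    linarith
  have hr₁' := abs_le.mp hr₁
  have hr₂' := abs_le.mp hr₂
  -- Part 1
  have key : |Real.sin ((φ₁ + φ₂) / 2) * Real.sin ((φ₁ - φ₂) / 2)| < 3 * δ := by
    rcases le_or_gt (1/3 : ℝ) δ with h3 | h3
    · have hcos : 0 < Real.cos ((φ₁ - φ₂)/2) :=
        Real.cos_pos_of_mem_Ioo ⟨by linarith, by linarith⟩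
      have hsq1 : Real.sin ((φ₁ - φ₂)/2) ^ 2 < 1 := by
        nlinarith [Real.sin_sq_add_cos_sq ((φ₁ - φ₂)/2), mul_pos hcos hcos]
      have hsd : |Real.sin ((φ₁ - φ₂)/2)| < 1 := (sq_lt_one_iff_abs_lt_one _).mp hsq1
      have hss : |Real.sin ((φ₁ + φ₂)/2)| ≤ 1 := Real.abs_sin_le_one _
      rw [abs_mul]
      have h4 : |Real.sin ((φ₁ + φ₂)/2)| * |Real.sin ((φ₁ - φ₂)/2)|
          ≤ |Real.sin ((φ₁ - φ₂)/2)| := by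
        calc |Real.sin ((φ₁ + φ₂)/2)| * |Real.sin ((φ₁ - φ₂)/2)|
            ≤ 1 * |Real.sin ((φ₁ - φ₂)/2)| :=
              mul_le_mul_of_nonneg_right hss (abs_nonneg _)
          _ = |Real.sin ((φ₁ - φ₂)/2)| := one_mul _
      linarith
    · -- algebraic case: δ < 1/3
      have id₁ : 2*c*Real.cos φ₁ - (1 + c^2 - ρ^2)
          = (r₁ - 1) * (r₁ + 1 - 2*c*Real.cos φ₁) := by linear_combination -E₁
      have id₂ : 2*c*Real.cos φ₂ - (1 + c^2 - ρ^2)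
          = (r₂ - 1) * (r₂ + 1 - 2*c*Real.cos φ₂) := by linear_combination -E₂
      have b₁ : |2*c*Real.cos φ₁ - (1 + c^2 - ρ^2)| ≤ δ * (1 + r₁ + 2*c) := by
        rw [id₁, abs_mul]
        have h1 : |r₁ + 1 - 2*c*Real.cos φ₁| ≤ 1 + r₁ + 2*c := by
          rw [abs_le]; constructor <;> nlinarith
        exact mul_le_mul hr₁ h1 (abs_nonneg _) hδ.le
      have b₂ : |2*c*Real.cos φ₂ - (1 + c^2 - ρ^2)| ≤ δ * (1 + r₂ + 2*c) := by
        rw [id₂, abs_mul]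
        have h1 : |r₂ + 1 - 2*c*Real.cos φ₂| ≤ 1 + r₂ + 2*c := by
          rw [abs_le]; constructor <;> nlinarith
        exact mul_le_mul hr₂ h1 (abs_nonneg _) hδ.le
      have n₁ := abs_le.mp b₁
      have n₂ := abs_le.mp b₂
      rw [hprod, abs_lt]
      constructor <;>
        nlinarith [mul_pos hδ (sub_pos.mpr hc1), n₁.1, n₁.2, n₂.1, n₂.2]
  refine ⟨key, ?_⟩
  -- Part 2
  have hd2 : |(φ₁ - φ₂)/2| < (φ₁ + φ₂)/2 := by
    rw [abs_lt]; constructor <;> linarith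
  have hd4 : |(φ₁ - φ₂)/2| < Real.pi/2 := by
    rw [abs_lt]; constructor <;> linarith
  have hd3 : (φ₁ + φ₂)/2 ≤ Real.pi - |(φ₁ - φ₂)/2| := by
    rcases abs_cases ((φ₁ - φ₂)/2) with ⟨h, _⟩ | ⟨h, _⟩ <;> rw [h] <;> linarith
  have hsin_le : Real.sin |(φ₁ - φ₂)/2| ≤ Real.sin ((φ₁ + φ₂)/2) :=
    sin_aux_17 _ _ (abs_nonneg _) hd2.le hd3
  have habs : |Real.sin ((φ₁ - φ₂)/2)| = Real.sin |(φ₁ - φ₂)/2| := by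
    rcases le_or_gt 0 ((φ₁ - φ₂)/2) with h | h
    · rw [abs_of_nonneg h,
        abs_of_nonneg (Real.sin_nonneg_of_nonneg_of_le_pi h (by linarith))]
    · rw [abs_of_neg h, Real.sin_neg]
      exact abs_of_nonpos (Real.sin_nonpos_of_nonpos_of_neg_pi_le h.le (by linarith))
  have hsinpos : 0 ≤ Real.sin ((φ₁ + φ₂)/2) :=
    Real.sin_nonneg_of_nonneg_of_le_pi (by linarith) (by linarith)
  have hsq : Real.sin |(φ₁ - φ₂)/2| ^ 2 < 3 * δ := by
    have h1 : Real.sin |(φ₁ - φ₂)/2| ^ 2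
        ≤ |Real.sin ((φ₁ + φ₂)/2) * Real.sin ((φ₁ - φ₂)/2)| := by
      rw [abs_mul, habs, abs_of_nonneg hsinpos, sq]
      exact mul_le_mul_of_nonneg_right hsin_le
        (Real.sin_nonneg_of_nonneg_of_le_pi (abs_nonneg _) (by linarith))
    linarith
  have hlow : 2/Real.pi * |(φ₁ - φ₂)/2| ≤ Real.sin |(φ₁ - φ₂)/2| :=
    Real.mul_le_sin (abs_nonneg _) hd4.le
  have hlow' : |(φ₁ - φ₂)/2| ≤ Real.pi/2 * Real.sin |(φ₁ - φ₂)/2| := by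
    have h2 := mul_le_mul_of_nonneg_left hlow (by positivity : (0:ℝ) ≤ Real.pi/2)
    have h3 : Real.pi/2 * (2/Real.pi * |(φ₁ - φ₂)/2|) = |(φ₁ - φ₂)/2| := by
      field_simp
    linarith
  have hsqrt : Real.sqrt δ ^ 2 = δ := Real.sq_sqrt hδ.le
  have h7 : |(φ₁ - φ₂)/2| ^ 2 ≤ (Real.pi/2 * Real.sin |(φ₁ - φ₂)/2|) ^ 2 :=
    pow_le_pow_left₀ (abs_nonneg _) hlow' 2
  have h8 : (Real.pi/2 * Real.sin |(φ₁ - φ₂)/2|) ^ 2 < Real.pi^2/4 * (3*δ) := by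
    have := mul_lt_mul_of_pos_left hsq (show (0:ℝ) < Real.pi^2/4 by positivity)
    calc (Real.pi/2 * Real.sin |(φ₁ - φ₂)/2|) ^ 2
        = Real.pi^2/4 * Real.sin |(φ₁ - φ₂)/2| ^ 2 := by ring
      _ < Real.pi^2/4 * (3*δ) := this
  have hBsq : (2 * Real.pi * Real.sqrt δ) ^ 2 = 4 * Real.pi^2 * δ := by
    have : (2 * Real.pi * Real.sqrt δ) ^ 2 = 4 * Real.pi^2 * Real.sqrt δ ^ 2 := by ring
    rw [this, hsqrt]
  have h5 : |(φ₁ - φ₂)/2| ^ 2 < (2 * Real.pi * Real.sqrt δ) ^ 2 := by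
    rw [hBsq]
    nlinarith [h7, h8, sq_nonneg Real.pi, mul_pos (mul_pos hπ hπ) hδ]
  have h9 : |(φ₁ - φ₂)/2| < 2 * Real.pi * Real.sqrt δ :=
    lt_of_pow_lt_pow_left₀ 2 (by positivity) h5
  have h10 : |(φ₁ - φ₂)/2| = |φ₁ - φ₂| / 2 := by
    rw [abs_div]; norm_num
  rw [h10] at h9
  linarith
end
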